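/- Let a_1 ≤ … ≤ a_n be positive reals with a_1 = 0 allowed after shifting; define for complex z ∉ (-∞,0] the function h_n(z) = exp((1/n) ∑_{k=1}^n Log(b_k + z)) - z, where b_k = a_k - a_1 ≥ 0 (so b_1 = 0). Then for real t > 0 with t ∈ (b_ℓ, b_{ℓ+1}) for some 1 ≤ ℓ ≤ n-1, the limit as ε → 0^+ of the imaginary part Im h_n(-t + iε) equals (∏_{k=1}^n |b_k - t|)^{1/n} · sin(ℓπ/n), and for t ≥ b_n this limit equals 0. -/

import Mathlib

open Filter Finset Complex Topology

private lemma approach_aux (x : ℝ) :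
    Tendsto (fun ε : ℝ => (x : ℂ) + ε * Complex.I) (𝓝[>] (0:ℝ)) (𝓝 (x : ℂ)) := by
  have h : Continuous (fun ε : ℝ => (x : ℂ) + ε * Complex.I) := by continuity
  simpa using (h.tendsto 0).mono_left nhdsWithin_le_nhds

private lemma log_tendsto_of_neg {x : ℝ} (hx : x < 0) :
    Tendsto (fun ε : ℝ => Complex.log ((x : ℂ) + ε * Complex.I)) (𝓝[>] (0:ℝ))
      (𝓝 ((Real.log |x| : ℂ) + Real.pi * Complex.I)) := by
  have h1 : Tendsto (fun ε : ℝ => (x : ℂ) + ε * Complex.I) (𝓝[>] (0:ℝ))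
      (𝓝[{z : ℂ | 0 ≤ z.im}] (x : ℂ)) := by
    rw [tendsto_nhdsWithin_iff]
    refine ⟨approach_aux x, ?_⟩
    filter_upwards [self_mem_nhdsWithin] with ε (hε : ε ∈ Set.Ioi (0:ℝ))
    simp [Set.mem_setOf_eq, le_of_lt (show (0:ℝ) < ε from hε)]
  have h2 := Complex.tendsto_log_nhdsWithin_im_nonneg_of_re_neg_of_im_zero
    (z := (x : ℂ)) (by simpa using hx) (by simp)
  simpa [Function.comp_def] using h2.comp h1

private lemma log_tendsto_of_pos {x : ℝ} (hx : 0 < x) :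
    Tendsto (fun ε : ℝ => Complex.log ((x : ℂ) + ε * Complex.I)) (𝓝[>] (0:ℝ))
      (𝓝 ((Real.log x : ℂ))) := by
  have hc : ContinuousAt Complex.log (x : ℂ) :=
    continuousAt_clog (by simp [Complex.mem_slitPlane_iff, hx])
  have := hc.tendsto.comp (approach_aux x)
  simpa [← Complex.ofReal_log hx.le, Function.comp_def] using this

private lemma exp_inv_sum_log (n : ℕ) (s : Finset ℕ) (a : ℕ → ℝ) (ha : ∀ k ∈ s, 0 < a k) :
    Real.exp ((n : ℝ)⁻¹ * ∑ k ∈ s, Real.log (a k)) = ∏ k ∈ s, (a k) ^ ((n : ℝ)⁻¹) := by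
  rw [Finset.mul_sum, Real.exp_sum]
  exact Finset.prod_congr rfl fun k hk => by
    rw [Real.rpow_def_of_pos (ha k hk), mul_comm]

/-- Main limit when no `c k` vanishes: `c k < 0` for `k ≤ m`, `c k > 0` for `k > m`. -/
private lemma main_neg (n : ℕ) (hn : 0 < n) (c : ℕ → ℝ) (m : ℕ) (hm : m ≤ n)
    (hneg : ∀ k ∈ Finset.Icc 1 n, k ≤ m → c k < 0)
    (hpos : ∀ k ∈ Finset.Icc 1 n, m < k → 0 < c k) :
    Tendsto (fun ε : ℝ =>
        (Complex.exp ((n : ℂ)⁻¹ *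
          ∑ k ∈ Finset.Icc 1 n, Complex.log ((c k : ℂ) + ε * Complex.I))).im)
      (𝓝[>] (0:ℝ))
      (𝓝 ((∏ k ∈ Finset.Icc 1 n, |c k|) ^ ((n : ℝ)⁻¹) * Real.sin (m * Real.pi / n))) := by
  set A : ℝ := ∑ k ∈ Finset.Icc 1 n, Real.log |c k| with hA
  set L : ℕ → ℂ := fun k => (Real.log |c k| : ℂ) + (if k ≤ m then (Real.pi : ℂ) * Complex.I else 0)
    with hL
  have habs : ∀ k ∈ Finset.Icc 1 n, c k ≠ 0 := by
    intro k hk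
    rcases le_or_gt k m with h | h
    · exact (hneg k hk h).ne
    · exact (hpos k hk h).ne'
  -- limit of the sum of logs
  have hsum : Tendsto (fun ε : ℝ =>
      ∑ k ∈ Finset.Icc 1 n, Complex.log ((c k : ℂ) + ε * Complex.I)) (𝓝[>] (0:ℝ))
      (𝓝 (∑ k ∈ Finset.Icc 1 n, L k)) := by
    refine tendsto_finset_sum _ fun k hk => ?_
    rcases le_or_gt k m with h | h
    · simpa [hL, h] using log_tendsto_of_neg (hneg k hk h)
    · have := log_tendsto_of_pos (hpos k hk h)
      simpa [hL, not_le.2 h, abs_of_pos (hpos k hk h)] using this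
  have hsum_eq : (∑ k ∈ Finset.Icc 1 n, L k) = (A : ℂ) + (m : ℂ) * Real.pi * Complex.I := by
    rw [hL]
    rw [Finset.sum_add_distrib]
    congr 1
    · push_cast [hA]; rfl
    · rw [← Finset.sum_filter]
      have hfil : Finset.filter (fun k => k ≤ m) (Finset.Icc 1 n) = Finset.Icc 1 m := by
        ext k; simp; omega
      rw [hfil, Finset.sum_const, Nat.card_Icc, Nat.add_sub_cancel, nsmul_eq_mul]
      ring
  rw [hsum_eq] at hsum
  -- compose with exp and im
  have hexp : Tendsto (fun ε : ℝ =>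
      (Complex.exp ((n : ℂ)⁻¹ *
        ∑ k ∈ Finset.Icc 1 n, Complex.log ((c k : ℂ) + ε * Complex.I))).im)
      (𝓝[>] (0:ℝ))
      (𝓝 ((Complex.exp ((n : ℂ)⁻¹ * ((A : ℂ) + (m : ℂ) * Real.pi * Complex.I))).im)) :=
    (Complex.continuous_im.tendsto _).comp
      ((Complex.continuous_exp.tendsto _).comp (tendsto_const_nhds.mul hsum))
  convert hexp using 2
  have hz : (n : ℂ)⁻¹ * ((A : ℂ) + (m : ℂ) * Real.pi * Complex.I)
      = ((((n:ℝ)⁻¹ * A : ℝ)) : ℂ) + (((m * Real.pi / n : ℝ)) : ℂ) * Complex.I := by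
    push_cast
    have hn' : (n : ℂ) ≠ 0 := Nat.cast_ne_zero.2 hn.ne'
    field_simp
  have hre : (((((n:ℝ)⁻¹ * A : ℝ)) : ℂ) + (((m * Real.pi / n : ℝ)) : ℂ) * Complex.I).re
      = (n:ℝ)⁻¹ * A := by simp
  have him : (((((n:ℝ)⁻¹ * A : ℝ)) : ℂ) + (((m * Real.pi / n : ℝ)) : ℂ) * Complex.I).im
      = m * Real.pi / n := by simp
  rw [hz, Complex.exp_im, hre, him]
  congr 1
  rw [hA, exp_inv_sum_log n _ _ (fun k hk => abs_pos.2 (habs k hk))]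
  exact Real.finset_prod_rpow _ _ (fun k _ => abs_nonneg _) _ |>.symm

/-- Squeeze limit when some `c k` vanishes. -/
private lemma main_zero (n : ℕ) (hn : 0 < n) (c : ℕ → ℝ) (k0 : ℕ)
    (hk0 : k0 ∈ Finset.Icc 1 n) (hc0 : c k0 = 0) :
    Tendsto (fun ε : ℝ =>
        (Complex.exp ((n : ℂ)⁻¹ *
          ∑ k ∈ Finset.Icc 1 n, Complex.log ((c k : ℂ) + ε * Complex.I))).im)
      (𝓝[>] (0:ℝ)) (𝓝 0) := by
  have hninv : ((n : ℝ)⁻¹ : ℝ) ≠ 0 := inv_ne_zero (Nat.cast_ne_zero.2 hn.ne')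
  have hbound : ∀ ε ∈ Set.Ioi (0:ℝ),
      ‖(Complex.exp ((n : ℂ)⁻¹ *
          ∑ k ∈ Finset.Icc 1 n, Complex.log ((c k : ℂ) + ε * Complex.I))).im‖
        ≤ ∏ k ∈ Finset.Icc 1 n, (‖(c k : ℂ) + ε * Complex.I‖) ^ ((n : ℝ)⁻¹) := by
    intro ε hε
    rw [Set.mem_Ioi] at hε
    set w := (n : ℂ)⁻¹ * ∑ k ∈ Finset.Icc 1 n, Complex.log ((c k : ℂ) + ε * Complex.I) with hw
    have h1 : |(Complex.exp w).im| ≤ ‖Complex.exp w‖ := Complex.abs_im_le_norm _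
    rw [Real.norm_eq_abs]
    refine h1.trans_eq ?_
    rw [Complex.norm_exp]
    have hwre : w.re
        = (n : ℝ)⁻¹ * ∑ k ∈ Finset.Icc 1 n, Real.log (‖(c k : ℂ) + ε * Complex.I‖) := by
      rw [hw, show ((n : ℂ)⁻¹ = (((n : ℝ)⁻¹ : ℝ) : ℂ)) from by push_cast; rfl,
        Complex.re_ofReal_mul]
      congr 1
      rw [Complex.re_sum]
      exact Finset.sum_congr rfl fun k _ => Complex.log_re _
    rw [hwre, exp_inv_sum_log]
    intro k _
    apply norm_pos_iff.mpr
    intro h0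
    have him := congrArg Complex.im h0
    simp at him
    exact hε.ne' him
  have hprod : Tendsto
      (fun ε : ℝ => ∏ k ∈ Finset.Icc 1 n, (‖(c k : ℂ) + ε * Complex.I‖) ^ ((n : ℝ)⁻¹))
      (𝓝[>] (0:ℝ)) (𝓝 (∏ k ∈ Finset.Icc 1 n, (‖(c k : ℂ)‖) ^ ((n : ℝ)⁻¹))) := by
    refine tendsto_finset_prod _ fun k _ => ?_
    have h1 : Tendsto (fun ε : ℝ => ‖(c k : ℂ) + ε * Complex.I‖) (𝓝[>] (0:ℝ))
        (𝓝 (‖(c k : ℂ)‖)) :=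
      (continuous_norm.tendsto _).comp (approach_aux _)
    exact ((Real.continuousAt_rpow_const _ _
      (Or.inr (by positivity))).tendsto.comp h1)
  have hzero : (∏ k ∈ Finset.Icc 1 n, (‖(c k : ℂ)‖) ^ ((n : ℝ)⁻¹)) = 0 :=
    Finset.prod_eq_zero hk0 (by simp [hc0, Real.zero_rpow hninv])
  rw [hzero] at hprod
  exact squeeze_zero_norm' (by filter_upwards [self_mem_nhdsWithin] using hbound) hprod

private lemma mono_of (n : ℕ) (b : ℕ → ℝ)
    (h : ∀ k ∈ Finset.Icc 1 (n - 1), b k ≤ b (k + 1)) :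
    ∀ i j, 1 ≤ i → i ≤ j → j ≤ n → b i ≤ b j := by
  intro i j hi hij
  induction j, hij using Nat.le_induction with
  | base => intro _; exact le_rfl
  | succ j hij ih =>
    intro hjn
    have h1 : b i ≤ b j := ih (by omega)
    have h2 : b j ≤ b (j + 1) := h j (by simp; omega)
    exact h1.trans h2


/-- Boundary imaginary part of `h_n(z) = exp((1/n) ∑ Log(b_k + z)) - z` along the cut:
for `t ∈ (b_ℓ, b_{ℓ+1})`, `Im h_n(-t+iε) → (∏ |b_k - t|)^{1/n} sin(ℓπ/n)` as `ε → 0⁺`,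
and for `t ≥ b_n` (with `t > 0`) the limit is `0`. -/
theorem boundary_imaginary_part (n : ℕ) (hn : 0 < n) (b : ℕ → ℝ) (hb1 : b 1 = 0)
    (hnn : ∀ k ∈ Finset.Icc 1 n, 0 ≤ b k)
    (hmono : ∀ k ∈ Finset.Icc 1 (n - 1), b k ≤ b (k + 1)) :
    (∀ ℓ ∈ Finset.Icc 1 (n - 1), ∀ t ∈ Set.Ioo (b ℓ) (b (ℓ + 1)), 0 < t →
      Filter.Tendsto
        (fun ε : ℝ =>
          (Complex.exp ((n : ℂ)⁻¹ *
              ∑ k ∈ Finset.Icc 1 n, Complex.log ((b k : ℂ) + (-(t : ℂ) + ε * Complex.I)))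
            - (-(t : ℂ) + ε * Complex.I)).im)
        (nhdsWithin 0 (Set.Ioi 0))
        (nhds ((∏ k ∈ Finset.Icc 1 n, |b k - t|) ^ ((n : ℝ)⁻¹) *
          Real.sin (ℓ * Real.pi / n)))) ∧
    (∀ t : ℝ, 0 < t → b n ≤ t →
      Filter.Tendsto
        (fun ε : ℝ =>
          (Complex.exp ((n : ℂ)⁻¹ *
              ∑ k ∈ Finset.Icc 1 n, Complex.log ((b k : ℂ) + (-(t : ℂ) + ε * Complex.I)))
            - (-(t : ℂ) + ε * Complex.I)).im)
        (nhdsWithin 0 (Set.Ioi 0)) (nhds 0)) := by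
  have hmono' := mono_of n b hmono
  have heps : Tendsto (fun ε : ℝ => ε) (𝓝[>] (0:ℝ)) (𝓝 0) :=
    tendsto_id.mono_left nhdsWithin_le_nhds
  have hz : ∀ (t : ℝ) (k : ℕ) (ε : ℝ),
      ((b k - t : ℝ) : ℂ) + ε * Complex.I = (b k : ℂ) + (-(t : ℂ) + ε * Complex.I) := by
    intro t k ε; push_cast; ring
  have hcongr : ∀ (t : ℝ) (ε : ℝ),
      (Complex.exp ((n : ℂ)⁻¹ *
          ∑ k ∈ Finset.Icc 1 n, Complex.log (((fun k => b k - t) k : ℝ) + ε * Complex.I))).im - ε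
      = (Complex.exp ((n : ℂ)⁻¹ *
          ∑ k ∈ Finset.Icc 1 n, Complex.log ((b k : ℂ) + (-(t : ℂ) + ε * Complex.I)))
          - (-(t : ℂ) + ε * Complex.I)).im := by
    intro t ε
    simp only [hz]
    simp
  constructor
  · intro ℓ hℓ t ht hpt
    rw [Finset.mem_Icc] at hℓ
    rw [Set.mem_Ioo] at ht
    have hneg : ∀ k ∈ Finset.Icc 1 n, k ≤ ℓ → (fun k => b k - t) k < 0 := by
      intro k hk hkl
      rw [Finset.mem_Icc] at hk
      have : b k ≤ b ℓ := hmono' k ℓ hk.1 hkl (by omega)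
      simp only
      linarith [ht.1]
    have hpos : ∀ k ∈ Finset.Icc 1 n, ℓ < k → 0 < (fun k => b k - t) k := by
      intro k hk hkl
      rw [Finset.mem_Icc] at hk
      have : b (ℓ + 1) ≤ b k := hmono' (ℓ + 1) k (by omega) (by omega) hk.2
      simp only
      linarith [ht.2]
    have hmain := main_neg n hn (fun k => b k - t) ℓ (by omega) hneg hpos
    have := hmain.sub heps
    rw [sub_zero] at this
    exact this.congr (hcongr t)
  · intro t hpt hbn
    rcases lt_or_eq_of_le hbn with hlt | heq
    · have hneg : ∀ k ∈ Finset.Icc 1 n, k ≤ n → (fun k => b k - t) k < 0 := by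
        intro k hk _
        rw [Finset.mem_Icc] at hk
        have : b k ≤ b n := hmono' k n hk.1 hk.2 le_rfl
        simp only
        linarith
      have hpos : ∀ k ∈ Finset.Icc 1 n, n < k → 0 < (fun k => b k - t) k := by
        intro k hk hkn
        rw [Finset.mem_Icc] at hk
        omega
      have hmain := main_neg n hn (fun k => b k - t) n le_rfl hneg hpos
      have hsin : Real.sin ((n : ℝ) * Real.pi / n) = 0 := by
        have hn' : (n : ℝ) ≠ 0 := Nat.cast_ne_zero.2 hn.ne'
        rw [show (n : ℝ) * Real.pi / n = Real.pi from by field_simp]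
        exact Real.sin_pi
      rw [hsin, mul_zero] at hmain
      have := hmain.sub heps
      rw [sub_zero] at this
      exact this.congr (hcongr t)
    · have hmain := main_zero n hn (fun k => b k - t) n
        (by rw [Finset.mem_Icc]; omega) (by simp [heq])
      have := hmain.sub heps
      rw [sub_zero] at this
      exact this.congr (hcongr t)
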